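/- Let f : ℝⁿ → ℝ be differentiable, Q ∈ ℝ^{n×p}, x ∈ ℝⁿ, δ > 0, and let m̂(s) = c + ĝᵀ s + (1/2) sᵀ Ĥ s be a quadratic model with symmetric Ĥ satisfying ‖Ĥ‖ ≤ κ_h for some κ_h ≥ 1, and suppose the trial step s_k with ‖s_k‖ ≤ δ satisfies m̂(0) − m̂(s_k) ≥ (κ_fcd/2) ‖ĝ‖ min{δ, ‖ĝ‖/max(‖Ĥ‖, 1)} for some κ_fcd ∈ (0,1]. Let η₁ ∈ (0,1), η₂ > 0, and suppose the estimates f⁰, fˢ are ε_f-accurate for f(x) and f(x + Q s_k) with radius δ, where 0 < ε_f < (1/4) η₁ η₂ κ_fcd min{ η₂/κ_h, 1 }. If the iteration is successful, i.e., ρ := (f⁰ − fˢ)/(m̂(0) − m̂(s_k)) ≥ η₁ and ‖ĝ‖ ≥ η₂ δ, then f(x + Q s_k) − f(x) ≤ −C₂ δ², where C₂ = (1/2) η₁ η₂ κ_fcd min{ η₂/κ_h, 1 } − 2 ε_f > 0. -/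
import Mathlib


open MeasureTheory Matrix
open scoped RealInnerProductSpace

/-- The operator norm of a real matrix with respect to Euclidean norms
(a norm consistent with the Euclidean norm). -/
noncomputable def matOpNorm {n p : ℕ} (Q : Matrix (Fin n) (Fin p) ℝ) : ℝ :=
  ‖LinearMap.toContinuousLinearMap (Matrix.toEuclideanLin Q)‖

/-- **Lemma 4.6.** If the estimates are sufficiently accurate and the iteration is
successful, then `f` decreases by at least `C₂ δ²`, where
`C₂ = (1/2) η₁ η₂ κ_fcd min{η₂/κ_h, 1} - 2 ε_f > 0`. -/
theorem stmt_11 {n p : ℕ} (f : EuclideanSpace ℝ (Fin n) → ℝ) (hf : Differentiable ℝ f)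
    (Q : Matrix (Fin n) (Fin p) ℝ) (x : EuclideanSpace ℝ (Fin n))
    (δ : ℝ) (hδ : 0 < δ)
    -- the quadratic model m̂(s) = c + ĝᵀ s + (1/2) sᵀ Ĥ s
    (c : ℝ) (g : EuclideanSpace ℝ (Fin p)) (H : Matrix (Fin p) (Fin p) ℝ)
    (hHsymm : H.IsSymm) (κh : ℝ) (hκh : 1 ≤ κh) (hH : matOpNorm H ≤ κh)
    (mhat : EuclideanSpace ℝ (Fin p) → ℝ)
    (hmhat : ∀ t, mhat t = c + ⟪g, t⟫ + 1 / 2 * ⟪t, Matrix.toEuclideanLin H t⟫)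
    -- the trial step with the fraction-of-Cauchy-decrease property
    (sk : EuclideanSpace ℝ (Fin p)) (hsk : ‖sk‖ ≤ δ)
    (κfcd : ℝ) (hκfcd : κfcd ∈ Set.Ioc (0:ℝ) 1)
    (hcauchy : mhat 0 - mhat sk
      ≥ κfcd / 2 * ‖g‖ * min δ (‖g‖ / max (matOpNorm H) 1))
    (η₁ η₂ : ℝ) (hη₁ : η₁ ∈ Set.Ioo (0:ℝ) 1) (hη₂ : 0 < η₂)
    -- ε_f-accurate estimates of f(x) and f(x + Q s_k)
    (εf : ℝ) (hεf0 : 0 < εf)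
    (hεf : εf < 1 / 4 * η₁ * η₂ * κfcd * min (η₂ / κh) 1)
    (f0 fs : ℝ)
    (hf0 : |f0 - f x| ≤ εf * δ ^ 2)
    (hfs : |fs - f (x + Matrix.toEuclideanLin Q sk)| ≤ εf * δ ^ 2)
    -- the iteration is successful
    (hρ : (f0 - fs) / (mhat 0 - mhat sk) ≥ η₁) (hg : ‖g‖ ≥ η₂ * δ) :
    0 < 1 / 2 * η₁ * η₂ * κfcd * min (η₂ / κh) 1 - 2 * εf ∧
    f (x + Matrix.toEuclideanLin Q sk) - f x
      ≤ -(1 / 2 * η₁ * η₂ * κfcd * min (η₂ / κh) 1 - 2 * εf) * δ ^ 2 := by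
  have hκfcd0 := hκfcd.1
  have hη₁0 := hη₁.1
  have hκh0 : (0:ℝ) < κh := lt_of_lt_of_le one_pos hκh
  have hM0 : 0 < min (η₂ / κh) 1 := lt_min (div_pos hη₂ hκh0) one_pos
  have hmax : max (matOpNorm H) 1 ≤ κh := max_le hH hκh
  have hmaxpos : (0:ℝ) < max (matOpNorm H) 1 := lt_of_lt_of_le one_pos (le_max_right _ _)
  have h2 : η₂ * δ / κh ≤ ‖g‖ / max (matOpNorm H) 1 := by
    rw [div_le_div_iff₀ hκh0 hmaxpos]
    nlinarith [hg, hmax, hδ, norm_nonneg g]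
  have h1a : δ * min (η₂ / κh) 1 ≤ η₂ * δ / κh := by
    have h := min_le_left (η₂ / κh) 1
    calc δ * min (η₂ / κh) 1 ≤ δ * (η₂ / κh) := by nlinarith
      _ = η₂ * δ / κh := by ring
  have h3 : δ * min (η₂ / κh) 1 ≤ min δ (‖g‖ / max (matOpNorm H) 1) := by
    refine le_min ?_ (le_trans h1a h2)
    have h := min_le_right (η₂ / κh) 1
    nlinarith
  have hD : κfcd / 2 * η₂ * min (η₂ / κh) 1 * δ ^ 2 ≤ mhat 0 - mhat sk := by
    have step1 : κfcd / 2 * η₂ * min (η₂ / κh) 1 * δ ^ 2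
        ≤ κfcd / 2 * ‖g‖ * (δ * min (η₂ / κh) 1) := by
      nlinarith [mul_nonneg (sub_nonneg.mpr hg)
        (mul_nonneg (mul_nonneg hκfcd0.le hδ.le) hM0.le)]
    have step2 : κfcd / 2 * ‖g‖ * (δ * min (η₂ / κh) 1)
        ≤ κfcd / 2 * ‖g‖ * min δ (‖g‖ / max (matOpNorm H) 1) := by
      nlinarith [mul_nonneg (sub_nonneg.mpr h3) (mul_nonneg hκfcd0.le (norm_nonneg g))]
    linarith [hcauchy]
  have hK : 0 < κfcd / 2 * η₂ * min (η₂ / κh) 1 * δ ^ 2 :=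
    mul_pos (mul_pos (mul_pos (by linarith) hη₂) hM0) (pow_pos hδ 2)
  have hDpos : 0 < mhat 0 - mhat sk := lt_of_lt_of_le hK hD
  have hfd : η₁ * (mhat 0 - mhat sk) ≤ f0 - fs := by
    have h := hρ
    rw [ge_iff_le, le_div_iff₀ hDpos] at h
    linarith
  have h4 := mul_le_mul_of_nonneg_left hD hη₁0.le
  have ha := abs_le.mp hf0
  have hb := abs_le.mp hfs
  set y := f (x + Matrix.toEuclideanLin Q sk) with hy
  constructor
  · linarith
  · linarith [h4, hfd, ha.2, hb.1]
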